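/- For every even integer m ≥ 2 and every integer n ≥ 2, the brush number of K_m × P_n equals n·(m²/4). -/

import Mathlib

open Finset SimpleGraph

open scoped Classical in
/-- The number of brushes needed at `v` in the cleaning process induced by the
ordering `σ` of the vertices: `max (0, d⁺(v) - d⁻(v))` (truncated `ℕ` subtraction),
where `d⁺(v)` counts neighbours `u` with `σ v < σ u` and `d⁻(v)` those with `σ u < σ v`. -/
noncomputable def brushWeight {V : Type} [Fintype V] (G : SimpleGraph V)
    (σ : V ≃ Fin (Fintype.card V)) (v : V) : ℕ :=
  (Finset.univ.filter (fun u => G.Adj v u ∧ σ v < σ u)).card -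
    (Finset.univ.filter (fun u => G.Adj v u ∧ σ u < σ v)).card

/-- The brush number of `G`: the minimum over all orderings `σ` of the vertices of
the total number of brushes `∑ v, w_σ(v)`. -/
noncomputable def brushNumber {V : Type} [Fintype V] (G : SimpleGraph V) : ℕ :=
  ⨅ σ : V ≃ Fin (Fintype.card V), ∑ v, brushWeight G σ v


namespace BP
open scoped Classical
open Fin.NatCast

variable {m n : ℕ}

noncomputable def NbrJ (n : ℕ) (j : Fin n) : Finset (Fin n) :=
  Finset.univ.filter (fun j' => (pathGraph n).Adj j j')

noncomputable def cp (ρ : Fin m × Fin n → ℕ) (v : Fin m × Fin n) : ℕ :=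
  (Finset.univ.filter (fun i' : Fin m => ρ v < ρ (i', v.2))).card

noncomputable def rk (ρ : Fin m × Fin n → ℕ) (v : Fin m × Fin n) : ℕ :=
  (Finset.univ.filter (fun i' : Fin m => ρ (i', v.2) < ρ v)).card

noncomputable def pp (ρ : Fin m × Fin n → ℕ) (v : Fin m × Fin n) : ℕ :=
  ((NbrJ n v.2).filter (fun j' => ρ v < ρ (v.1, j'))).card

noncomputable def pm (ρ : Fin m × Fin n → ℕ) (v : Fin m × Fin n) : ℕ :=
  ((NbrJ n v.2).filter (fun j' => ρ (v.1, j') < ρ v)).card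

lemma split_card (v : Fin m × Fin n) (q : (Fin m × Fin n) → (Fin m × Fin n) → Prop)
    [inst : ∀ a b, Decidable (q a b)]
    (hq : ¬ q v (v.1, v.2)) :
    (Finset.univ.filter (fun u => ((⊤ : SimpleGraph (Fin m)) □ pathGraph n).Adj v u ∧ q v u)).card
      = (Finset.univ.filter (fun i' : Fin m => q v (i', v.2))).card
        + ((NbrJ n v.2).filter (fun j' => q v (v.1, j'))).card := by
  classical
  have hveq : (v.1, v.2) = v := rfl
  have hsplit : (Finset.univ.filter (fun u => ((⊤ : SimpleGraph (Fin m)) □ pathGraph n).Adj v u ∧ q v u))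
      = (Finset.univ.filter (fun u : Fin m × Fin n => (u.2 = v.2 ∧ q v u))
        ∪ Finset.univ.filter (fun u : Fin m × Fin n => (u.1 = v.1 ∧ (pathGraph n).Adj v.2 u.2 ∧ q v u))) := by
    rw [← Finset.filter_or]
    apply Finset.filter_congr
    intro u _
    simp only [boxProd_adj, top_adj]
    constructor
    · rintro ⟨h1 | h2, hu⟩
      · exact Or.inl ⟨h1.2.symm, hu⟩
      · exact Or.inr ⟨h2.2.symm, h2.1, hu⟩
    · rintro (⟨h1, hu⟩ | ⟨h1, h2, hu⟩)
      · refine ⟨Or.inl ⟨?_, h1.symm⟩, hu⟩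
        intro heq
        apply hq
        have : (v.1, v.2) = u := Prod.ext_iff.mpr ⟨heq, h1.symm⟩
        rwa [this]
      · exact ⟨Or.inr ⟨h2, h1.symm⟩, hu⟩
  rw [hsplit, Finset.card_union_of_disjoint]
  · congr 1
    · apply Finset.card_nbij' (fun u => u.1) (fun i' => (i', v.2))
      · intro u hu
        simp only [Finset.mem_coe, Finset.mem_filter, Finset.mem_univ, true_and] at hu ⊢
        have : (u.1, v.2) = u := Prod.ext_iff.mpr ⟨rfl, hu.1.symm⟩
        rw [this]; exact hu.2
      · intro i' hi'
        simp only [Finset.mem_coe, Finset.mem_filter, Finset.mem_univ, true_and] at hi' ⊢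
        first | exact hi' | exact ⟨rfl, hi'⟩
      · intro u hu
        simp only [Finset.mem_coe, Finset.mem_filter, Finset.mem_univ, true_and] at hu
        exact Prod.ext_iff.mpr ⟨rfl, hu.1.symm⟩
      · intro i' _; rfl
    · apply Finset.card_nbij' (fun u => u.2) (fun j' => (v.1, j'))
      · intro u hu
        simp only [Finset.mem_coe, Finset.mem_filter, Finset.mem_univ, true_and, NbrJ] at hu ⊢
        have : (v.1, u.2) = u := Prod.ext_iff.mpr ⟨hu.1.symm, rfl⟩
        rw [this]; exact ⟨hu.2.1, hu.2.2⟩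
      · intro j' hj'
        simp only [Finset.mem_coe, Finset.mem_filter, Finset.mem_univ, true_and, NbrJ] at hj' ⊢
        first | exact ⟨hj'.1, hj'.2⟩ | exact ⟨rfl, hj'.1, hj'.2⟩
      · intro u hu
        simp only [Finset.mem_coe, Finset.mem_filter, Finset.mem_univ, true_and] at hu
        exact Prod.ext_iff.mpr ⟨hu.1.symm, rfl⟩
      · intro j' _; rfl
  · rw [Finset.disjoint_left]
    intro u hu1 hu2
    simp only [Finset.mem_filter, Finset.mem_univ, true_and] at hu1 hu2
    have h2 := hu2.2.1
    rw [← hu1.1] at h2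
    exact (pathGraph n).irrefl h2

lemma cp_add_rk (ρ : Fin m × Fin n → ℕ) (hρ : Function.Injective ρ) (v : Fin m × Fin n) :
    cp ρ v + rk ρ v = m - 1 := by
  classical
  have hdisj : Disjoint (Finset.univ.filter (fun i' : Fin m => ρ v < ρ (i', v.2)))
      (Finset.univ.filter (fun i' : Fin m => ρ (i', v.2) < ρ v)) := by
    rw [Finset.disjoint_left]
    intro a h1 h2
    simp only [Finset.mem_filter, Finset.mem_univ, true_and] at h1 h2
    omega
  have hunion : (Finset.univ.filter (fun i' : Fin m => ρ v < ρ (i', v.2)))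
      ∪ (Finset.univ.filter (fun i' : Fin m => ρ (i', v.2) < ρ v)) = Finset.univ.erase v.1 := by
    ext i'
    simp only [Finset.mem_union, Finset.mem_filter, Finset.mem_univ, true_and, Finset.mem_erase,
      and_true]
    constructor
    · rintro (h | h) rfl <;> simp only [show ((v.1 : Fin m), v.2) = v from rfl] at h <;> omega
    · intro hne
      have : ρ (i', v.2) ≠ ρ v := by
        intro heq
        exact hne (congrArg Prod.fst (hρ (a₁ := (i', v.2)) (a₂ := v) heq))
      omega
  have := Finset.card_union_of_disjoint hdisj
  rw [hunion] at this
  rw [cp, rk, ← this]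
  rw [Finset.card_erase_of_mem (Finset.mem_univ _), Finset.card_univ, Fintype.card_fin]

lemma rk_lt (ρ : Fin m × Fin n → ℕ) (v : Fin m × Fin n) : rk ρ v < m := by
  classical
  have hsub : (Finset.univ.filter (fun i' : Fin m => ρ (i', v.2) < ρ v)) ⊆ Finset.univ.erase v.1 := by
    intro a ha
    simp only [Finset.mem_filter, Finset.mem_univ, true_and] at ha
    simp only [Finset.mem_erase, Finset.mem_univ, and_true]
    rintro rfl
    simp only [show ((v.1 : Fin m), v.2) = v from rfl] at ha
    omega
  have := Finset.card_le_card hsub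
  rw [Finset.card_erase_of_mem (Finset.mem_univ _), Finset.card_univ, Fintype.card_fin] at this
  have hm : 0 < m := v.1.pos
  unfold rk
  omega

lemma rk_lt_rk (ρ : Fin m × Fin n → ℕ) {a b : Fin m} {j : Fin n}
    (h : ρ (a, j) < ρ (b, j)) : rk ρ (a, j) < rk ρ (b, j) := by
  classical
  apply Finset.card_lt_card
  rw [Finset.ssubset_iff_of_subset]
  · exact ⟨a, by simp [h], by simp⟩
  · intro i' hi'
    simp only [Finset.mem_filter, Finset.mem_univ, true_and] at hi' ⊢
    omega

/-- The early-half predicate. -/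
def Ev (ρ : Fin m × Fin n → ℕ) (v : Fin m × Fin n) : Prop := 2 * rk ρ v + 1 < m

lemma ord (ρ : Fin m × Fin n → ℕ) (hρ : Function.Injective ρ) {a b : Fin m} {j : Fin n}
    (ha : Ev ρ (a, j)) (hb : ¬ Ev ρ (b, j)) : ρ (a, j) < ρ (b, j) := by
  rcases lt_trichotomy (ρ (a, j)) (ρ (b, j)) with h | h | h
  · exact h
  · exact absurd (congrArg Prod.fst (hρ h)) (by rintro rfl; exact hb ha)
  · have := rk_lt_rk ρ h
    unfold Ev at ha hb
    omega

lemma rk_inj (ρ : Fin m × Fin n → ℕ) (hρ : Function.Injective ρ) (j : Fin n) :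
    Function.Injective (fun i : Fin m => rk ρ (i, j)) := by
  intro a b hab
  simp only at hab
  rcases lt_trichotomy (ρ (a, j)) (ρ (b, j)) with h | h | h
  · exact absurd hab (Nat.ne_of_lt (rk_lt_rk ρ h))
  · exact congrArg Prod.fst (hρ h)
  · exact absurd hab.symm (Nat.ne_of_lt (rk_lt_rk ρ h))

lemma re {A : Type*} [AddCommMonoid A] (ρ : Fin m × Fin n → ℕ) (hρ : Function.Injective ρ)
    (j : Fin n) (φ : ℕ → A) :
    ∑ i : Fin m, φ (rk ρ (i, j)) = ∑ k ∈ Finset.range m, φ k := by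
  classical
  have himg : Finset.univ.image (fun i : Fin m => rk ρ (i, j)) = Finset.range m := by
    apply Finset.eq_of_subset_of_card_le
    · intro k hk
      simp only [Finset.mem_image] at hk
      obtain ⟨i, _, rfl⟩ := hk
      simpa using rk_lt ρ (i, j)
    · rw [Finset.card_range, Finset.card_image_of_injective _ (rk_inj ρ hρ j),
        Finset.card_univ, Fintype.card_fin]
  rw [← himg, Finset.sum_image (fun a _ b _ h => rk_inj ρ hρ j h)]

lemma nbrJ_eq (j : Fin n) :
    NbrJ n j = (if h : (j : ℕ) + 1 < n then {(⟨(j : ℕ) + 1, h⟩ : Fin n)} else ∅)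
      ∪ (if h : 0 < (j : ℕ) then
          {(⟨(j : ℕ) - 1, lt_of_le_of_lt (Nat.sub_le _ _) j.isLt⟩ : Fin n)} else ∅) := by
  classical
  ext j'
  have hj := j.isLt
  have hj' := j'.isLt
  simp only [NbrJ, Finset.mem_filter, Finset.mem_univ, true_and, pathGraph_adj,
    Finset.mem_union]
  split_ifs with h1 h2 h2 <;> simp [Fin.ext_iff] <;> omega

lemma eps_sum (ρ : Fin m × Fin n → ℕ) (hρ : Function.Injective ρ) (v : Fin m × Fin n) :
    ((pp ρ v : ℤ) - pm ρ v) = ∑ j' ∈ NbrJ n v.2, (if ρ v < ρ (v.1, j') then (1 : ℤ) else -1) := by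
  classical
  have h1 : (pp ρ v : ℤ) = ∑ j' ∈ NbrJ n v.2, (if ρ v < ρ (v.1, j') then (1 : ℤ) else 0) := by
    rw [pp, Finset.card_filter]
    push_cast
    rfl
  have h2 : (pm ρ v : ℤ) = ∑ j' ∈ NbrJ n v.2, (if ρ (v.1, j') < ρ v then (1 : ℤ) else 0) := by
    rw [pm, Finset.card_filter]
    push_cast
    rfl
  rw [h1, h2, ← Finset.sum_sub_distrib]
  apply Finset.sum_congr rfl
  intro j' hj'
  have hne : ρ (v.1, j') ≠ ρ v := by
    intro heq
    have : (v.1, j') = v := hρ (by rw [heq])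
    have : j' = v.2 := congrArg Prod.snd this
    subst this
    simp only [NbrJ, Finset.mem_filter] at hj'
    exact (pathGraph n).irrefl hj'.2
  rcases Nat.lt_or_ge (ρ v) (ρ (v.1, j')) with h | h
  · rw [if_pos h, if_pos h, if_neg (show ¬ ρ (v.1, j') < ρ v by omega)]; ring
  · have hlt : ρ (v.1, j') < ρ v := by omega
    rw [if_neg (show ¬ ρ v < ρ (v.1, j') by omega), if_neg (show ¬ ρ v < ρ (v.1, j') by omega),
      if_pos hlt]; ring

lemma sumOddZ (M : ℕ) : ∑ k ∈ Finset.range M, (2 * (k : ℤ) + 1) = (M : ℤ) ^ 2 := by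
  induction M with
  | zero => simp
  | succ K ih => rw [Finset.sum_range_succ, ih]; push_cast; ring

lemma range_sum_E (M : ℕ) (φ : ℕ → ℤ) :
    ∑ k ∈ Finset.range (2 * M), (if 2 * k + 1 < 2 * M then φ k else 0)
      = ∑ k ∈ Finset.range M, φ k := by
  classical
  rw [← Finset.sum_subset (Finset.range_subset_range.mpr (by omega : M ≤ 2 * M))
    (fun x hx hnx => ?_)]
  · apply Finset.sum_congr rfl
    intro k hk
    rw [if_pos (by simp at hk; omega)]
  · simp only [Finset.mem_range] at hx hnx
    rw [if_neg (by omega)]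

lemma claimA (ρ : Fin m × Fin n → ℕ) (hρ : Function.Injective ρ) (M : ℕ) (hM : m = 2 * M) :
    ∑ v : Fin m × Fin n, (if Ev ρ v then ((m : ℤ) - 1 - 2 * rk ρ v) else 0)
      = (n : ℤ) * (M : ℤ) ^ 2 := by
  classical
  rw [Fintype.sum_prod_type_right]
  have hcol : ∀ j : Fin n,
      ∑ i : Fin m, (if Ev ρ (i, j) then ((m : ℤ) - 1 - 2 * rk ρ (i, j)) else 0)
        = (M : ℤ) ^ 2 := by
    intro j
    have hpoint : ∀ i : Fin m, (if Ev ρ (i, j) then ((m : ℤ) - 1 - 2 * rk ρ (i, j)) else 0)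
        = (fun k : ℕ => if 2 * k + 1 < m then ((m : ℤ) - 1 - 2 * k) else 0) (rk ρ (i, j)) := by
      intro i
      simp only [Ev]
      split_ifs <;> simp_all
    rw [Finset.sum_congr rfl (fun i _ => hpoint i),
      re (A := ℤ) ρ hρ j (fun k => if 2 * k + 1 < m then ((m : ℤ) - 1 - 2 * k) else 0),
      hM, range_sum_E]
    have hrefl := Finset.sum_range_reflect (fun k => 2 * (k : ℤ) + 1) M
    rw [← sumOddZ M, ← hrefl]
    apply Finset.sum_congr rfl
    intro k hk
    simp only [Finset.mem_range] at hk
    have : (((M - 1 - k : ℕ)) : ℤ) = (M : ℤ) - 1 - k := by omega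
    rw [this]
    push_cast
    ring
  calc ∑ j : Fin n, ∑ i : Fin m, (if Ev ρ (i, j) then ((m : ℤ) - 1 - 2 * rk ρ (i, j)) else 0)
      = ∑ _j : Fin n, (M : ℤ) ^ 2 := Finset.sum_congr rfl (fun j _ => hcol j)
    _ = (n : ℤ) * (M : ℤ) ^ 2 := by rw [Finset.sum_const, Finset.card_univ, Fintype.card_fin,
          nsmul_eq_mul]

lemma range_sum_one (M : ℕ) :
    ∑ k ∈ Finset.range (2 * M), (if 2 * k + 1 < 2 * M then (1 : ℕ) else 0) = M := by
  classical
  rw [← Finset.sum_subset (Finset.range_subset_range.mpr (by omega : M ≤ 2 * M))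
    (fun x hx hnx => ?_)]
  · rw [Finset.sum_congr rfl (fun k hk => if_pos (by simp at hk; omega)), Finset.sum_const,
      Finset.card_range, smul_eq_mul, mul_one]
  · simp only [Finset.mem_range] at hx hnx
    rw [if_neg (by omega)]

lemma card_E (ρ : Fin m × Fin n → ℕ) (hρ : Function.Injective ρ) (M : ℕ) (hM : m = 2 * M)
    (j : Fin n) : (Finset.univ.filter (fun i : Fin m => Ev ρ (i, j))).card = M := by
  classical
  rw [Finset.card_filter]
  have hpoint : ∀ i : Fin m, (if Ev ρ (i, j) then (1 : ℕ) else 0)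
      = (fun k : ℕ => if 2 * k + 1 < m then (1 : ℕ) else 0) (rk ρ (i, j)) := by
    intro i
    simp only [Ev]
    split_ifs <;> simp_all
  rw [Finset.sum_congr rfl (fun i _ => hpoint i),
    re (A := ℕ) ρ hρ j (fun k => if 2 * k + 1 < m then (1 : ℕ) else 0), hM, range_sum_one]

noncomputable def gE (ρ : Fin m × Fin n → ℕ) (v u : Fin m × Fin n) : ℤ :=
  (if Ev ρ v then (1 : ℤ) else 0) * (if ρ v < ρ u then (1 : ℤ) else -1)

lemma gap [NeZero n] (ρ : Fin m × Fin n → ℕ) (hρ : Function.Injective ρ) (M : ℕ)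
    (hM : m = 2 * M) (t : ℕ) (ht : t + 1 < n) :
    0 ≤ ∑ i : Fin m, (gE ρ (i, (t : Fin n)) (i, ((t + 1 : ℕ) : Fin n))
      + gE ρ (i, ((t + 1 : ℕ) : Fin n)) (i, (t : Fin n))) := by
  classical
  set jt : Fin n := (t : Fin n) with hjtdef
  set jt1 : Fin n := ((t + 1 : ℕ) : Fin n) with hjt1def
  have hjt : (jt : ℕ) = t := Fin.val_cast_of_lt (by omega)
  have hjt1 : (jt1 : ℕ) = t + 1 := Fin.val_cast_of_lt ht
  have hne : ∀ i k : Fin m, ρ (i, jt) ≠ ρ (k, jt1) := by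
    intro i k heq
    have := congrArg Prod.snd (hρ heq)
    simp only at this
    rw [Fin.ext_iff, hjt, hjt1] at this
    omega
  set f : Fin m → ℤ := fun i => gE ρ (i, jt) (i, jt1) + gE ρ (i, jt1) (i, jt) with hf
  set A : Finset (Fin m) := Finset.univ.filter (fun i => Ev ρ (i, jt)) with hA
  set B : Finset (Fin m) := Finset.univ.filter (fun i => Ev ρ (i, jt1)) with hB
  have hiA : ∀ i : Fin m, i ∈ A ↔ Ev ρ (i, jt) := by
    intro i; rw [hA]; simp
  have hiB : ∀ i : Fin m, i ∈ B ↔ Ev ρ (i, jt1) := by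
    intro i; rw [hB]; simp
  have hcards : A.card = B.card := by
    rw [hA, hB, card_E ρ hρ M hM, card_E ρ hρ M hM]
  have hf0 : ∀ i, i ∉ A \ B → i ∉ B \ A → f i = 0 := by
    intro i h1 h2
    rw [Finset.mem_sdiff, not_and_or, not_not] at h1 h2
    rcases lt_or_gt_of_ne (hne i i) with hlt | hgt
    · by_cases hEA : Ev ρ (i, jt)
      · have hEB : Ev ρ (i, jt1) := by
          rcases h1 with h | h
          · exact absurd ((hiA i).mpr hEA) h
          · exact (hiB i).mp h
        rw [hf]
        simp only [gE, if_pos hEA, if_pos hEB, if_pos hlt, if_neg (show ¬ ρ (i, jt1) < ρ (i, jt) by omega)]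
        ring
      · have hEB : ¬ Ev ρ (i, jt1) := by
          rcases h2 with h | h
          · intro hc; exact h ((hiB i).mpr hc)
          · exact fun hc => hEA ((hiA i).mp h)
        rw [hf]
        simp only [gE, if_neg hEA, if_neg hEB]
        ring
    · by_cases hEA : Ev ρ (i, jt)
      · have hEB : Ev ρ (i, jt1) := by
          rcases h1 with h | h
          · exact absurd ((hiA i).mpr hEA) h
          · exact (hiB i).mp h
        rw [hf]
        simp only [gE, if_pos hEA, if_pos hEB, if_pos (show ρ (i, jt1) < ρ (i, jt) by omega),
          if_neg (show ¬ ρ (i, jt) < ρ (i, jt1) by omega)]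
        ring
      · have hEB : ¬ Ev ρ (i, jt1) := by
          rcases h2 with h | h
          · intro hc; exact h ((hiB i).mpr hc)
          · exact fun hc => hEA ((hiA i).mp h)
        rw [hf]
        simp only [gE, if_neg hEA, if_neg hEB]
        ring
  have hfm1 : ∀ i, (-1 : ℤ) ≤ f i := by
    intro i
    rcases lt_or_gt_of_ne (hne i i) with hlt | hgt
    · rw [hf]
      simp only [gE, if_pos hlt, if_neg (show ¬ ρ (i, jt1) < ρ (i, jt) by omega)]
      split_ifs <;> norm_num
    · rw [hf]
      simp only [gE, if_pos (show ρ (i, jt1) < ρ (i, jt) by omega),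
        if_neg (show ¬ ρ (i, jt) < ρ (i, jt1) by omega)]
      split_ifs <;> norm_num
  have key4 : (∀ i ∈ B \ A, f i = 1) ∨ (∀ i ∈ A \ B, f i = 1) := by
    by_cases hABne : (A \ B).Nonempty
    · have hAne : A.Nonempty := by
        obtain ⟨i, hi⟩ := hABne
        exact ⟨i, (Finset.mem_sdiff.mp hi).1⟩
      have hBAne : (B \ A).Nonempty := by
        rw [← Finset.card_pos, Finset.card_sdiff_comm hcards.symm]
        rw [← Finset.card_pos] at hABne
        omega
      have hBne : B.Nonempty := by
        obtain ⟨i, hi⟩ := hBAne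
        exact ⟨i, (Finset.mem_sdiff.mp hi).1⟩
      obtain ⟨ia, hiaA, hmaxA⟩ := Finset.exists_max_image A (fun i => ρ (i, jt)) hAne
      obtain ⟨ib, hibB, hmaxB⟩ := Finset.exists_max_image B (fun i => ρ (i, jt1)) hBne
      rcases lt_or_gt_of_ne (hne ia ib) with hlt | hgt
      · right
        intro i hi
        rw [Finset.mem_sdiff] at hi
        have hEA : Ev ρ (i, jt) := (hiA i).mp hi.1
        have hEB : ¬ Ev ρ (i, jt1) := fun hc => hi.2 ((hiB i).mpr hc)
        have h1 : ρ (i, jt) ≤ ρ (ia, jt) := hmaxA i hi.1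
        have h2 : ρ (ib, jt1) < ρ (i, jt1) := ord ρ hρ ((hiB ib).mp hibB) hEB
        have : ρ (i, jt) < ρ (i, jt1) := by omega
        rw [hf]
        simp only [gE, if_pos hEA, if_neg hEB, if_pos this]
        ring
      · left
        intro i hi
        rw [Finset.mem_sdiff] at hi
        have hEB : Ev ρ (i, jt1) := (hiB i).mp hi.1
        have hEA : ¬ Ev ρ (i, jt) := fun hc => hi.2 ((hiA i).mpr hc)
        have h1 : ρ (i, jt1) ≤ ρ (ib, jt1) := hmaxB i hi.1
        have h2 : ρ (ia, jt) < ρ (i, jt) := ord ρ hρ ((hiA ia).mp hiaA) hEA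
        have hlt2 : ρ (i, jt1) < ρ (i, jt) := by omega
        rw [hf]
        simp only [gE, if_pos hEB, if_neg hEA, if_pos hlt2,
          if_neg (show ¬ ρ (i, jt) < ρ (i, jt1) by omega)]
        ring
    · left
      intro i hi
      exfalso
      have : (B \ A).card = 0 := by
        rw [Finset.card_sdiff_comm hcards.symm]
        rw [Finset.not_nonempty_iff_eq_empty] at hABne
        rw [hABne]
        rfl
      rw [Finset.card_eq_zero] at this
      rw [this] at hi
      exact Finset.notMem_empty i hi
  have hsum : ∑ i : Fin m, f i = ∑ i ∈ (A \ B) ∪ (B \ A), f i := by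
    symm
    apply Finset.sum_subset (Finset.subset_univ _)
    intro i _ hni
    rw [Finset.mem_union, not_or] at hni
    exact hf0 i hni.1 hni.2
  have hdisj : Disjoint (A \ B) (B \ A) := disjoint_sdiff_sdiff
  rw [show (∑ i : Fin m, (gE ρ (i, jt) (i, jt1) + gE ρ (i, jt1) (i, jt))) = ∑ i : Fin m, f i from rfl,
    hsum, Finset.sum_union hdisj]
  have hcc : ((A \ B).card : ℤ) = ((B \ A).card : ℤ) := by
    rw [Finset.card_sdiff_comm hcards]
  rcases key4 with h | h
  · have h1 : (-(((A \ B).card : ℤ))) ≤ ∑ i ∈ A \ B, f i := by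
      calc (-(((A \ B).card : ℤ))) = ∑ _i ∈ A \ B, (-1 : ℤ) := by
            rw [Finset.sum_const, nsmul_eq_mul]; ring
        _ ≤ ∑ i ∈ A \ B, f i := Finset.sum_le_sum (fun i _ => hfm1 i)
    have h2 : ∑ i ∈ B \ A, f i = ((B \ A).card : ℤ) := by
      rw [Finset.sum_congr rfl h, Finset.sum_const, nsmul_eq_mul, mul_one]
    rw [h2]
    omega
  · have h1 : (-(((B \ A).card : ℤ))) ≤ ∑ i ∈ B \ A, f i := by
      calc (-(((B \ A).card : ℤ))) = ∑ _i ∈ B \ A, (-1 : ℤ) := by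
            rw [Finset.sum_const, nsmul_eq_mul]; ring
        _ ≤ ∑ i ∈ B \ A, f i := Finset.sum_le_sum (fun i _ => hfm1 i)
    have h2 : ∑ i ∈ A \ B, f i = ((A \ B).card : ℤ) := by
      rw [Finset.sum_congr rfl h, Finset.sum_const, nsmul_eq_mul, mul_one]
    rw [h2]
    omega

lemma nbr_sum [NeZero n] (h : Fin n → Fin n → ℤ) (j : Fin n) :
    ∑ j' ∈ NbrJ n j, h j j'
      = (if (j : ℕ) + 1 < n then h j ((((j : ℕ) + 1 : ℕ) : Fin n)) else 0)
        + (if 0 < (j : ℕ) then h j ((((j : ℕ) - 1 : ℕ) : Fin n)) else 0) := by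
  classical
  rw [nbrJ_eq]
  by_cases h1 : (j : ℕ) + 1 < n <;> by_cases h2 : 0 < (j : ℕ)
  · have e1 : (⟨(j : ℕ) + 1, h1⟩ : Fin n) = (((j : ℕ) + 1 : ℕ) : Fin n) :=
      Fin.eq_of_val_eq (by rw [Fin.val_cast_of_lt h1])
    have e2 : (⟨(j : ℕ) - 1, lt_of_le_of_lt (Nat.sub_le _ _) j.isLt⟩ : Fin n)
        = (((j : ℕ) - 1 : ℕ) : Fin n) :=
      Fin.eq_of_val_eq (by rw [Fin.val_cast_of_lt (lt_of_le_of_lt (Nat.sub_le _ _) j.isLt)])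
    have hd : Disjoint ({(⟨(j : ℕ) + 1, h1⟩ : Fin n)} : Finset (Fin n))
        {(⟨(j : ℕ) - 1, lt_of_le_of_lt (Nat.sub_le _ _) j.isLt⟩ : Fin n)} := by
      simp only [Finset.disjoint_singleton_left, Finset.mem_singleton, Fin.ext_iff]
      omega
    rw [dif_pos h1, dif_pos h2, if_pos h1, if_pos h2, Finset.sum_union hd,
      Finset.sum_singleton, Finset.sum_singleton, e1, e2]
  · have e1 : (⟨(j : ℕ) + 1, h1⟩ : Fin n) = (((j : ℕ) + 1 : ℕ) : Fin n) :=
      Fin.eq_of_val_eq (by rw [Fin.val_cast_of_lt h1])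
    rw [dif_pos h1, dif_neg h2, if_pos h1, if_neg h2, Finset.union_empty,
      Finset.sum_singleton, e1, add_zero]
  · have e2 : (⟨(j : ℕ) - 1, lt_of_le_of_lt (Nat.sub_le _ _) j.isLt⟩ : Fin n)
        = (((j : ℕ) - 1 : ℕ) : Fin n) :=
      Fin.eq_of_val_eq (by rw [Fin.val_cast_of_lt (lt_of_le_of_lt (Nat.sub_le _ _) j.isLt)])
    rw [dif_neg h1, dif_pos h2, if_neg h1, if_pos h2, Finset.empty_union,
      Finset.sum_singleton, e2, zero_add]
  · rw [dif_neg h1, dif_neg h2, if_neg h1, if_neg h2, Finset.empty_union, Finset.sum_empty]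
    ring

lemma shift_sum (N : ℕ) (f : ℕ → ℤ) (h0 : f 0 = 0) :
    ∑ t ∈ Finset.range N, f t = ∑ t ∈ Finset.range (N - 1), f (t + 1) := by
  cases N with
  | zero => simp
  | succ K => rw [Finset.sum_range_succ' f K]; simp [h0]

lemma pathsum [NeZero n] (h : Fin n → Fin n → ℤ) :
    ∑ j : Fin n, ∑ j' ∈ NbrJ n j, h j j'
      = ∑ t ∈ Finset.range (n - 1),
          (h ((t : ℕ) : Fin n) (((t + 1 : ℕ)) : Fin n)
            + h (((t + 1 : ℕ)) : Fin n) ((t : ℕ) : Fin n)) := by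
  classical
  have key : ∑ j : Fin n, ∑ j' ∈ NbrJ n j, h j j'
      = ∑ x ∈ Finset.range n, ((if x + 1 < n then h ((x : ℕ) : Fin n) (((x + 1 : ℕ)) : Fin n) else 0)
          + (if 0 < x then h ((x : ℕ) : Fin n) (((x - 1 : ℕ)) : Fin n) else 0)) := by
    rw [← Fin.sum_univ_eq_sum_range (fun x =>
      (if x + 1 < n then h ((x : ℕ) : Fin n) (((x + 1 : ℕ)) : Fin n) else 0)
        + (if 0 < x then h ((x : ℕ) : Fin n) (((x - 1 : ℕ)) : Fin n) else 0)) n]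
    apply Finset.sum_congr rfl
    intro j _
    rw [nbr_sum h j, Fin.cast_val_eq_self]
  have hA : ∑ x ∈ Finset.range n, (if x + 1 < n then h ((x : ℕ) : Fin n) (((x + 1 : ℕ)) : Fin n) else 0)
      = ∑ t ∈ Finset.range (n - 1), h ((t : ℕ) : Fin n) (((t + 1 : ℕ)) : Fin n) := by
    rw [← Finset.sum_subset (Finset.range_subset_range.mpr (by omega : n - 1 ≤ n))
      (fun t ht hnt => by
        simp only [Finset.mem_range] at ht hnt
        rw [if_neg (by omega)])]
    apply Finset.sum_congr rfl
    intro t ht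
    simp only [Finset.mem_range] at ht
    rw [if_pos (by omega)]
  have hB : ∑ x ∈ Finset.range n, (if 0 < x then h ((x : ℕ) : Fin n) (((x - 1 : ℕ)) : Fin n) else 0)
      = ∑ t ∈ Finset.range (n - 1), h (((t + 1 : ℕ)) : Fin n) ((t : ℕ) : Fin n) := by
    rw [shift_sum n _ (by simp)]
    apply Finset.sum_congr rfl
    intro t ht
    rw [if_pos (by omega)]
    simp
  rw [key, Finset.sum_add_distrib, hA, hB]
  exact (Finset.sum_add_distrib).symm

lemma claimB [NeZero n] (ρ : Fin m × Fin n → ℕ) (hρ : Function.Injective ρ) (M : ℕ)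
    (hM : m = 2 * M) (hn : 2 ≤ n) :
    0 ≤ ∑ v : Fin m × Fin n, (if Ev ρ v then ((pp ρ v : ℤ) - pm ρ v) else 0) := by
  classical
  have hpoint : ∀ v : Fin m × Fin n,
      (if Ev ρ v then ((pp ρ v : ℤ) - pm ρ v) else 0) = ∑ j' ∈ NbrJ n v.2, gE ρ v (v.1, j') := by
    intro v
    by_cases hE : Ev ρ v
    · rw [if_pos hE, eps_sum ρ hρ v]
      apply Finset.sum_congr rfl
      intro j' _
      rw [gE, if_pos hE, one_mul]
    · rw [if_neg hE]
      symm
      apply Finset.sum_eq_zero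
      intro j' _
      rw [gE, if_neg hE, zero_mul]
  rw [Finset.sum_congr rfl (fun v _ => hpoint v), Fintype.sum_prod_type]
  have hinner : ∀ i : Fin m, ∑ j : Fin n, ∑ j' ∈ NbrJ n j, gE ρ (i, j) (i, j')
      = ∑ t ∈ Finset.range (n - 1),
          (gE ρ (i, ((t : ℕ) : Fin n)) (i, ((t + 1 : ℕ) : Fin n))
            + gE ρ (i, ((t + 1 : ℕ) : Fin n)) (i, ((t : ℕ) : Fin n))) := by
    intro i
    exact pathsum (fun a b => gE ρ (i, a) (i, b))
  rw [Finset.sum_congr rfl (fun i _ => hinner i), Finset.sum_comm]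
  apply Finset.sum_nonneg
  intro t ht
  simp only [Finset.mem_range] at ht
  exact gap ρ hρ M hM t (by omega)

noncomputable def dp (G : SimpleGraph (Fin m × Fin n)) (ρ : Fin m × Fin n → ℕ)
    (v : Fin m × Fin n) : ℕ :=
  (Finset.univ.filter (fun u => G.Adj v u ∧ ρ v < ρ u)).card

noncomputable def dm (G : SimpleGraph (Fin m × Fin n)) (ρ : Fin m × Fin n → ℕ)
    (v : Fin m × Fin n) : ℕ :=
  (Finset.univ.filter (fun u => G.Adj v u ∧ ρ u < ρ v)).card

lemma brushWeight_eq (G : SimpleGraph (Fin m × Fin n))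
    (σ : (Fin m × Fin n) ≃ Fin (Fintype.card (Fin m × Fin n))) (v : Fin m × Fin n) :
    brushWeight G σ v = dp G (fun w => (σ w).val) v - dm G (fun w => (σ w).val) v := rfl

lemma dp_eq (ρ : Fin m × Fin n → ℕ) (v : Fin m × Fin n) :
    dp ((⊤ : SimpleGraph (Fin m)) □ pathGraph n) ρ v = cp ρ v + pp ρ v := by
  unfold dp cp pp
  exact split_card v (fun a b => ρ a < ρ b) (by simp)

lemma dm_eq (ρ : Fin m × Fin n → ℕ) (v : Fin m × Fin n) :
    dm ((⊤ : SimpleGraph (Fin m)) □ pathGraph n) ρ v = rk ρ v + pm ρ v := by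
  unfold dm rk pm
  exact split_card v (fun a b => ρ b < ρ a) (by simp)

lemma lower_bound (hm : 2 ≤ m) (hn : 2 ≤ n) (M : ℕ) (hM : m = 2 * M)
    (σ : (Fin m × Fin n) ≃ Fin (Fintype.card (Fin m × Fin n))) :
    (n : ℤ) * (M : ℤ) ^ 2
      ≤ ∑ v : Fin m × Fin n,
          (brushWeight ((⊤ : SimpleGraph (Fin m)) □ pathGraph n) σ v : ℤ) := by
  classical
  haveI : NeZero n := ⟨by omega⟩
  obtain ⟨ρ, hρdef⟩ : ∃ ρ : Fin m × Fin n → ℕ, ρ = fun w => (σ w).val := ⟨_, rfl⟩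
  have hρ : Function.Injective ρ := by
    rw [hρdef]
    intro a b hab
    exact σ.injective (Fin.val_injective hab)
  have hpt : ∀ v : Fin m × Fin n,
      (if Ev ρ v then ((m : ℤ) - 1 - 2 * rk ρ v) + ((pp ρ v : ℤ) - pm ρ v) else 0)
        ≤ (brushWeight ((⊤ : SimpleGraph (Fin m)) □ pathGraph n) σ v : ℤ) := by
    intro v
    rw [brushWeight_eq _ σ v, ← hρdef, dp_eq ρ v, dm_eq ρ v]
    by_cases hE : Ev ρ v
    · rw [if_pos hE]
      have h3 := cp_add_rk ρ hρ v
      omega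
    · rw [if_neg hE]
      positivity
  have hsum := Finset.sum_le_sum (fun v (_ : v ∈ Finset.univ) => hpt v)
  have hsplit : ∑ v : Fin m × Fin n,
      (if Ev ρ v then ((m : ℤ) - 1 - 2 * rk ρ v) + ((pp ρ v : ℤ) - pm ρ v) else 0)
      = ∑ v : Fin m × Fin n, (if Ev ρ v then ((m : ℤ) - 1 - 2 * rk ρ v) else 0)
        + ∑ v : Fin m × Fin n, (if Ev ρ v then ((pp ρ v : ℤ) - pm ρ v) else 0) := by
    rw [← Finset.sum_add_distrib]
    apply Finset.sum_congr rfl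
    intro v _
    split_ifs <;> ring
  rw [hsplit, claimA ρ hρ M hM] at hsum
  have hB := claimB ρ hρ M hM hn
  linarith

noncomputable def sig0 (m n : ℕ) : (Fin m × Fin n) ≃ Fin (Fintype.card (Fin m × Fin n)) :=
  finProdFinEquiv.trans (finCongr (by simp))

lemma sig0_val (v : Fin m × Fin n) : ((sig0 m n v : Fin _) : ℕ) = (v.2 : ℕ) + n * (v.1 : ℕ) := by
  simp [sig0, finProdFinEquiv]

lemma rk0 (v : Fin m × Fin n) : rk (fun w => ((sig0 m n w : Fin _) : ℕ)) v = (v.1 : ℕ) := by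
  unfold rk
  have hn0 : 0 < n := v.2.pos
  have hset : (Finset.univ.filter (fun i' : Fin m =>
      ((sig0 m n (i', v.2) : Fin _) : ℕ) < ((sig0 m n v : Fin _) : ℕ))) = Finset.Iio v.1 := by
    ext i'
    simp only [Finset.mem_filter, Finset.mem_univ, true_and, Finset.mem_Iio, sig0_val,
      Fin.lt_def]
    constructor <;> intro h <;> [nlinarith [i'.isLt, v.1.isLt]; nlinarith]
  rw [hset, Fin.card_Iio]

lemma cp0 (v : Fin m × Fin n) : cp (fun w => ((sig0 m n w : Fin _) : ℕ)) v = m - 1 - (v.1 : ℕ) := by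
  unfold cp
  have hn0 : 0 < n := v.2.pos
  have hset : (Finset.univ.filter (fun i' : Fin m =>
      ((sig0 m n v : Fin _) : ℕ) < ((sig0 m n (i', v.2) : Fin _) : ℕ))) = Finset.Ioi v.1 := by
    ext i'
    simp only [Finset.mem_filter, Finset.mem_univ, true_and, Finset.mem_Ioi, sig0_val,
      Fin.lt_def]
    constructor <;> intro h <;> [nlinarith [i'.isLt, v.1.isLt]; nlinarith]
  rw [hset, Fin.card_Ioi]

lemma sig0_lt_iff (v u : Fin m × Fin n) :
    ((sig0 m n v : Fin _) : ℕ) < ((sig0 m n u : Fin _) : ℕ)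
      ↔ ((v.2 : ℕ) + n * (v.1 : ℕ) < (u.2 : ℕ) + n * (u.1 : ℕ)) := by
  rw [sig0_val, sig0_val]

lemma pp0 (v : Fin m × Fin n) :
    pp (fun w => ((sig0 m n w : Fin _) : ℕ)) v = if (v.2 : ℕ) + 1 < n then 1 else 0 := by
  classical
  obtain ⟨i, j⟩ := v
  unfold pp
  rw [nbrJ_eq]
  by_cases h1 : (j : ℕ) + 1 < n <;> by_cases h2 : 0 < (j : ℕ)
  · have c1 : ((sig0 m n (i, j) : Fin _) : ℕ)
        < ((sig0 m n (i, (⟨(j : ℕ) + 1, h1⟩ : Fin n)) : Fin _) : ℕ) := by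
      rw [sig0_lt_iff]
      show (j : ℕ) + n * (i : ℕ) < (j : ℕ) + 1 + n * (i : ℕ)
      omega
    have c2 : ¬ ((sig0 m n (i, j) : Fin _) : ℕ)
        < ((sig0 m n (i, (⟨(j : ℕ) - 1, lt_of_le_of_lt (Nat.sub_le _ _) j.isLt⟩ : Fin n)) : Fin _) : ℕ) := by
      rw [sig0_lt_iff]
      show ¬ ((j : ℕ) + n * (i : ℕ) < (j : ℕ) - 1 + n * (i : ℕ))
      omega
    rw [dif_pos h1, dif_pos h2, if_pos h1, Finset.filter_union, Finset.filter_singleton,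
      Finset.filter_singleton, if_pos c1, if_neg c2, Finset.union_empty, Finset.card_singleton]
  · have c1 : ((sig0 m n (i, j) : Fin _) : ℕ)
        < ((sig0 m n (i, (⟨(j : ℕ) + 1, h1⟩ : Fin n)) : Fin _) : ℕ) := by
      rw [sig0_lt_iff]
      show (j : ℕ) + n * (i : ℕ) < (j : ℕ) + 1 + n * (i : ℕ)
      omega
    rw [dif_pos h1, dif_neg h2, if_pos h1, Finset.union_empty, Finset.filter_singleton,
      if_pos c1, Finset.card_singleton]
  · have c2 : ¬ ((sig0 m n (i, j) : Fin _) : ℕ)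
        < ((sig0 m n (i, (⟨(j : ℕ) - 1, lt_of_le_of_lt (Nat.sub_le _ _) j.isLt⟩ : Fin n)) : Fin _) : ℕ) := by
      rw [sig0_lt_iff]
      show ¬ ((j : ℕ) + n * (i : ℕ) < (j : ℕ) - 1 + n * (i : ℕ))
      omega
    rw [dif_neg h1, dif_pos h2, if_neg h1, Finset.empty_union, Finset.filter_singleton,
      if_neg c2, Finset.card_empty]
  · rw [dif_neg h1, dif_neg h2, if_neg h1, Finset.empty_union, Finset.filter_empty,
      Finset.card_empty]

lemma pm0 (v : Fin m × Fin n) :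
    pm (fun w => ((sig0 m n w : Fin _) : ℕ)) v = if 0 < (v.2 : ℕ) then 1 else 0 := by
  classical
  obtain ⟨i, j⟩ := v
  unfold pm
  rw [nbrJ_eq]
  by_cases h1 : (j : ℕ) + 1 < n <;> by_cases h2 : 0 < (j : ℕ)
  · have c1 : ¬ ((sig0 m n (i, (⟨(j : ℕ) + 1, h1⟩ : Fin n)) : Fin _) : ℕ)
        < ((sig0 m n (i, j) : Fin _) : ℕ) := by
      rw [sig0_lt_iff]
      show ¬ ((j : ℕ) + 1 + n * (i : ℕ) < (j : ℕ) + n * (i : ℕ))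
      omega
    have c2 : ((sig0 m n (i, (⟨(j : ℕ) - 1, lt_of_le_of_lt (Nat.sub_le _ _) j.isLt⟩ : Fin n)) : Fin _) : ℕ)
        < ((sig0 m n (i, j) : Fin _) : ℕ) := by
      rw [sig0_lt_iff]
      show (j : ℕ) - 1 + n * (i : ℕ) < (j : ℕ) + n * (i : ℕ)
      omega
    rw [dif_pos h1, dif_pos h2, if_pos h2, Finset.filter_union, Finset.filter_singleton,
      Finset.filter_singleton, if_neg c1, if_pos c2, Finset.empty_union, Finset.card_singleton]
  · have c1 : ¬ ((sig0 m n (i, (⟨(j : ℕ) + 1, h1⟩ : Fin n)) : Fin _) : ℕ)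
        < ((sig0 m n (i, j) : Fin _) : ℕ) := by
      rw [sig0_lt_iff]
      show ¬ ((j : ℕ) + 1 + n * (i : ℕ) < (j : ℕ) + n * (i : ℕ))
      omega
    rw [dif_pos h1, dif_neg h2, if_neg h2, Finset.union_empty, Finset.filter_singleton,
      if_neg c1, Finset.card_empty]
  · have c2 : ((sig0 m n (i, (⟨(j : ℕ) - 1, lt_of_le_of_lt (Nat.sub_le _ _) j.isLt⟩ : Fin n)) : Fin _) : ℕ)
        < ((sig0 m n (i, j) : Fin _) : ℕ) := by
      rw [sig0_lt_iff]
      show (j : ℕ) - 1 + n * (i : ℕ) < (j : ℕ) + n * (i : ℕ)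
      omega
    rw [dif_neg h1, dif_pos h2, if_pos h2, Finset.empty_union, Finset.filter_singleton,
      if_pos c2, Finset.card_singleton]
  · rw [dif_neg h1, dif_neg h2, if_neg h2, Finset.empty_union, Finset.filter_empty,
      Finset.card_empty]

lemma colsum_nat (M c d : ℕ) (hc : c ≤ 1) (hd : d ≤ 1) :
    (∑ i ∈ Finset.range (2 * M), ((2 * M - 1 - i + c) - (i + d))) + M * d = M * M + M * c := by
  classical
  have h1 : ∑ i ∈ Finset.range (2 * M), ((2 * M - 1 - i + c) - (i + d))
      = ∑ i ∈ Finset.range M, ((2 * M - 1 - i + c) - (i + d)) := by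
    symm
    apply Finset.sum_subset (Finset.range_subset_range.mpr (by omega : M ≤ 2 * M))
    intro t ht hnt
    simp only [Finset.mem_range] at ht hnt
    omega
  have h2 : ∑ i ∈ Finset.range M, ((2 * M - 1 - i + c) - (i + d))
      = ∑ i ∈ Finset.range M, (2 * (M - 1 - i) + (1 + c - d)) := by
    apply Finset.sum_congr rfl
    intro t ht
    simp only [Finset.mem_range] at ht
    omega
  have h3 : ∑ i ∈ Finset.range M, (2 * (M - 1 - i) + (1 + c - d))
      = ∑ i ∈ Finset.range M, (2 * i + (1 + c - d)) :=
    Finset.sum_range_reflect (fun i => 2 * i + (1 + c - d)) M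
  have h4 : ∑ i ∈ Finset.range M, (2 * i + (1 + c - d))
      = 2 * (∑ i ∈ Finset.range M, i) + M * (1 + c - d) := by
    rw [Finset.sum_add_distrib, ← Finset.mul_sum, Finset.sum_const, Finset.card_range,
      smul_eq_mul]
  have h5 := Finset.sum_range_id_mul_two M
  rw [h1, h2, h3, h4]
  have h6 : 2 * (∑ i ∈ Finset.range M, i) = M * (M - 1) := by omega
  rw [h6]
  have h7 : (1 + c - d) + d = 1 + c := by omega
  have h8 : M * (M - 1) + M * (1 + c - d) + M * d = M * (M - 1) + M * (1 + c) := by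
    rw [add_assoc, ← Nat.mul_add, h7]
  rw [h8]
  cases M with
  | zero => simp
  | succ K => simp only [Nat.succ_sub_one]; ring

lemma ub_total (hn : 2 ≤ n) (M : ℕ) (hM : m = 2 * M) :
    ((∑ v : Fin m × Fin n,
        brushWeight ((⊤ : SimpleGraph (Fin m)) □ pathGraph n) (sig0 m n) v : ℕ) : ℤ)
      = (n : ℤ) * ((M : ℤ) * M) := by
  classical
  have hbw : ∀ v : Fin m × Fin n,
      brushWeight ((⊤ : SimpleGraph (Fin m)) □ pathGraph n) (sig0 m n) v
        = ((m - 1 - (v.1 : ℕ) + (if (v.2 : ℕ) + 1 < n then 1 else 0))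
            - ((v.1 : ℕ) + (if 0 < (v.2 : ℕ) then 1 else 0))) := by
    intro v
    rw [brushWeight_eq _ (sig0 m n) v, dp_eq, dm_eq, cp0, rk0, pp0, pm0]
  have hcol : ∀ j : Fin n, ((∑ i : Fin m,
      brushWeight ((⊤ : SimpleGraph (Fin m)) □ pathGraph n) (sig0 m n) (i, j) : ℕ) : ℤ)
      = (M : ℤ) * M + M * (if (j : ℕ) + 1 < n then (1 : ℤ) else 0)
        - M * (if 0 < (j : ℕ) then (1 : ℤ) else 0) := by
    intro j
    set c : ℕ := if (j : ℕ) + 1 < n then 1 else 0 with hc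
    set d : ℕ := if 0 < (j : ℕ) then 1 else 0 with hd
    have hc1 : c ≤ 1 := by rw [hc]; split_ifs <;> omega
    have hd1 : d ≤ 1 := by rw [hd]; split_ifs <;> omega
    have hsumN : ∑ i : Fin m,
        brushWeight ((⊤ : SimpleGraph (Fin m)) □ pathGraph n) (sig0 m n) (i, j)
        = ∑ t ∈ Finset.range (2 * M), ((2 * M - 1 - t + c) - (t + d)) := by
      rw [← hM, ← Fin.sum_univ_eq_sum_range (fun t => (m - 1 - t + c) - (t + d)) m]
      apply Finset.sum_congr rfl
      intro i _
      rw [hbw (i, j), hc, hd]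
    have hcn := colsum_nat M c d hc1 hd1
    rw [← hsumN] at hcn
    have hz := congrArg (Nat.cast (R := ℤ)) hcn
    push_cast at hz
    have hcz : ((c : ℕ) : ℤ) = (if (j : ℕ) + 1 < n then (1 : ℤ) else 0) := by
      rw [hc]; split_ifs <;> simp
    have hdz : ((d : ℕ) : ℤ) = (if 0 < (j : ℕ) then (1 : ℤ) else 0) := by
      rw [hd]; split_ifs <;> simp
    rw [hcz, hdz] at hz
    push_cast
    linarith
  have hcsum : ∑ j : Fin n, (if (j : ℕ) + 1 < n then (1 : ℤ) else 0) = (n : ℤ) - 1 := by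
    rw [Fin.sum_univ_eq_sum_range (fun t => if t + 1 < n then (1 : ℤ) else 0) n,
      ← Finset.sum_subset (Finset.range_subset_range.mpr (by omega : n - 1 ≤ n))
        (fun x hx hnx => by
          simp only [Finset.mem_range] at hx hnx
          rw [if_neg (by omega)]),
      Finset.sum_congr rfl (fun t ht => if_pos (by simp only [Finset.mem_range] at ht; omega)),
      Finset.sum_const, Finset.card_range, nsmul_eq_mul, mul_one]
    have : (1 : ℕ) ≤ n := by omega
    push_cast [this]
    ring
  have hdsum : ∑ j : Fin n, (if 0 < (j : ℕ) then (1 : ℤ) else 0) = (n : ℤ) - 1 := by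
    rw [Fin.sum_univ_eq_sum_range (fun t => if 0 < t then (1 : ℤ) else 0) n,
      shift_sum n _ (by simp),
      Finset.sum_congr rfl (fun t ht => if_pos (by omega)),
      Finset.sum_const, Finset.card_range, nsmul_eq_mul, mul_one]
    have : (1 : ℕ) ≤ n := by omega
    push_cast [this]
    ring
  have htot : ((∑ v : Fin m × Fin n,
      brushWeight ((⊤ : SimpleGraph (Fin m)) □ pathGraph n) (sig0 m n) v : ℕ) : ℤ)
      = ∑ j : Fin n, ((∑ i : Fin m,
          brushWeight ((⊤ : SimpleGraph (Fin m)) □ pathGraph n) (sig0 m n) (i, j) : ℕ) : ℤ) := by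
    push_cast
    rw [Fintype.sum_prod_type_right]
  rw [htot, Finset.sum_congr rfl (fun j _ => hcol j), Finset.sum_sub_distrib,
    Finset.sum_add_distrib, Finset.sum_const, ← Finset.mul_sum, ← Finset.mul_sum,
    hcsum, hdsum, Finset.card_univ, Fintype.card_fin, nsmul_eq_mul]
  ring

end BP

/-- For every even integer m ≥ 2 and every integer n ≥ 2, the brush number of
K_m × P_n equals n·(m²/4). -/
theorem brushNumber_complete_path_even (m n : ℕ) (hm : 2 ≤ m) (hme : Even m)
    (hn : 2 ≤ n) :
    brushNumber ((⊤ : SimpleGraph (Fin m)) □ pathGraph n) = n * (m ^ 2 / 4) := by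
  classical
  obtain ⟨M, hM2⟩ := hme
  have hM : m = 2 * M := by omega
  have hsq : m ^ 2 = 4 * (M * M) := by rw [hM]; ring
  have hq : m ^ 2 / 4 = M * M := by rw [hsq, Nat.mul_div_cancel_left _ (by norm_num)]
  have hub := BP.ub_total (m := m) hn M hM
  have hcast : ((n * (m ^ 2 / 4) : ℕ) : ℤ) = (n : ℤ) * ((M : ℤ) * M) := by
    rw [hq]; push_cast; ring
  unfold brushNumber
  apply le_antisymm
  · have h1 : (∑ v : Fin m × Fin n,
        brushWeight ((⊤ : SimpleGraph (Fin m)) □ pathGraph n) (BP.sig0 m n) v)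
        = n * (m ^ 2 / 4) := by
      have := hub
      rw [← hcast] at this
      exact_mod_cast this
    calc (⨅ σ : (Fin m × Fin n) ≃ Fin (Fintype.card (Fin m × Fin n)),
          ∑ v, brushWeight ((⊤ : SimpleGraph (Fin m)) □ pathGraph n) σ v)
        ≤ ∑ v, brushWeight ((⊤ : SimpleGraph (Fin m)) □ pathGraph n) (BP.sig0 m n) v :=
          ciInf_le (OrderBot.bddBelow _) _
      _ = n * (m ^ 2 / 4) := h1
  · haveI : Nonempty ((Fin m × Fin n) ≃ Fin (Fintype.card (Fin m × Fin n))) :=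
      ⟨Fintype.equivFin _⟩
    apply le_ciInf
    intro σ
    have hlb := BP.lower_bound hm hn M hM σ
    have h2 : ((n * (m ^ 2 / 4) : ℕ) : ℤ)
        ≤ ((∑ v : Fin m × Fin n,
            brushWeight ((⊤ : SimpleGraph (Fin m)) □ pathGraph n) σ v : ℕ) : ℤ) := by
      rw [hcast]
      calc (n : ℤ) * ((M : ℤ) * M) = (n : ℤ) * (M : ℤ) ^ 2 := by ring
        _ ≤ _ := hlb
        _ = _ := by push_cast; rfl
    exact_mod_cast h2
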